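/- Let T be a finite combinatorial tree, α ∈ [0,1), and i ≁ j two non-adjacent nodes. Let m_x^α be the α-lazy random walk measure at x (mass α at x and (1−α)/deg(x) at each neighbor of x). Then W₁(m_i^α, m_j^α) = d(i,j) + (1−α)·( (deg(i)−2)/deg(i) + (deg(j)−2)/deg(j) ). -/

import Mathlib

set_option linter.unusedSectionVars false
set_option maxHeartbeats 1000000

/-- 1-Wasserstein distance on a graph w.r.t. the shortest path metric. -/
noncomputable def W1 {V : Type*} [Fintype V] (G : SimpleGraph V) (μ ν : V → ℝ) : ℝ :=
  sInf { c : ℝ | ∃ π : V → V → ℝ, (∀ i j, 0 ≤ π i j) ∧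
    (∀ j, ∑ i, π i j = μ j) ∧ (∀ i, ∑ j, π i j = ν i) ∧
    c = ∑ i, ∑ j, π i j * (G.dist i j : ℝ) }

/-- The α-lazy random walk measure at `x`. -/
noncomputable def lazy {V : Type*} [Fintype V] [DecidableEq V] (G : SimpleGraph V)
    [DecidableRel G.Adj] (α : ℝ) (x : V) : V → ℝ :=
  fun y => if y = x then α else if G.Adj x y then (1 - α) / (G.degree x : ℝ) else 0

namespace W1Aux

open SimpleGraph Finset

section Unfintype

variable {V : Type*} [DecidableEq V] (G : SimpleGraph V)

lemma split_dist (hc : G.Connected) {u v y : V} (p : G.Walk u v)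
    (hp : p.length = G.dist u v) (hy : y ∈ p.support) :
    G.dist u y + G.dist y v = G.dist u v := by
  have h1 : G.dist u y ≤ (p.takeUntil y hy).length := dist_le _
  have h2 : G.dist y v ≤ (p.dropUntil y hy).length := dist_le _
  have h3 : (p.takeUntil y hy).length + (p.dropUntil y hy).length = p.length := by
    rw [← Walk.length_append, p.take_spec hy]
  have h4 := hc.dist_triangle (u := u) (v := y) (w := v)
  omega

lemma tree_dist_ne (hT : G.IsTree) {x y : V} (hadj : G.Adj x y) (z : V) :
    G.dist z x ≠ G.dist z y := by
  intro h
  obtain ⟨p, hp, hl⟩ := hT.isConnected.exists_path_of_dist z x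
  by_cases hy : y ∈ p.support
  · have := split_dist G hT.isConnected p hl hy
    have h1 : G.dist y x = 1 := dist_eq_one_iff_adj.2 hadj.symm
    omega
  · have hp2 : (Walk.cons hadj.symm p.reverse).IsPath :=
      hp.reverse.cons (by simpa using hy)
    obtain ⟨q, hq, hql⟩ := hT.isConnected.exists_path_of_dist z y
    have heq : q.reverse = Walk.cons hadj.symm p.reverse :=
      (hT.existsUnique_path y z).unique hq.reverse hp2
    have : q.reverse.length = p.reverse.length + 1 := by rw [heq, Walk.length_cons]
    simp only [Walk.length_reverse] at this
    omega

lemma tree_dist_succ (hT : G.IsTree) {x y : V} (hadj : G.Adj x y) (z : V) :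
    G.dist z y = G.dist z x + 1 ∨ G.dist z x = G.dist z y + 1 := by
  have h1 := hT.isConnected.dist_triangle (u := z) (v := x) (w := y)
  have h2 := hT.isConnected.dist_triangle (u := z) (v := y) (w := x)
  have h3 : G.dist x y = 1 := dist_eq_one_iff_adj.2 hadj
  have h4 : G.dist y x = 1 := dist_eq_one_iff_adj.2 hadj.symm
  have h5 := tree_dist_ne G hT hadj z
  omega

lemma geo_nbr (hc : G.Connected) {i j : V} (hne : i ≠ j) :
    ∃ b, G.Adj i b ∧ G.dist b j + 1 = G.dist i j := by
  obtain ⟨p, hp, hl⟩ := hc.exists_path_of_dist i j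
  have hd : 0 < G.dist i j := hc.pos_dist_of_ne hne
  match p, hl with
  | Walk.nil, hl => simp at hl; simp at hd
  | Walk.cons (v := b) h q, hl =>
    refine ⟨b, h, ?_⟩
    have h1 : G.dist b j ≤ q.length := dist_le _
    have h2 := hc.dist_triangle (u := i) (v := b) (w := j)
    have h3 : G.dist i b ≤ 1 := by
      have := dist_le (Walk.cons h Walk.nil)
      simpa using this
    simp only [Walk.length_cons] at hl
    omega

lemma geo_nbr_unique (hT : G.IsTree) {i j b b' : V}
    (hb : G.Adj i b) (hb' : G.Adj i b')
    (h : G.dist b j + 1 = G.dist i j) (h' : G.dist b' j + 1 = G.dist i j) :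
    b = b' := by
  have hc := hT.isConnected
  obtain ⟨q, hq, hql⟩ := hc.exists_path_of_dist b j
  obtain ⟨q', hq', hql'⟩ := hc.exists_path_of_dist b' j
  have hiq : i ∉ q.support := by
    intro hmem
    have := split_dist G hc q hql hmem
    have : G.dist b i = 1 := dist_eq_one_iff_adj.2 hb.symm
    omega
  have hiq' : i ∉ q'.support := by
    intro hmem
    have := split_dist G hc q' hql' hmem
    have : G.dist b' i = 1 := dist_eq_one_iff_adj.2 hb'.symm
    omega
  have hp1 : (Walk.cons hb q).IsPath := hq.cons hiq
  have hp2 : (Walk.cons hb' q').IsPath := hq'.cons hiq'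
  have heq : Walk.cons hb q = Walk.cons hb' q' :=
    (hT.existsUnique_path i j).unique hp1 hp2
  have := congrArg (fun w => w.getVert 1) heq
  simpa [Walk.getVert_cons_succ, Walk.getVert_zero] using this

lemma pair_le (hT : G.IsTree) {i j a b : V} (hne : i ≠ j) (hnadj : ¬ G.Adj i j)
    (ha : G.Adj j a) (hb : G.Adj i b) :
    G.dist a b + G.dist i j ≤ G.dist a i + G.dist b j := by
  have hc := hT.isConnected
  have hd0 : G.dist i j ≠ 0 := by
    intro h0; exact hne (hc.dist_eq_zero_iff.mp h0)
  have hd1 : G.dist i j ≠ 1 := fun h1 => hnadj (dist_eq_one_iff_adj.mp h1)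
  have hdji : G.dist j i = G.dist i j := dist_comm ..
  rcases tree_dist_succ G hT hb j with hbj | hbj
  · have h1 := hc.dist_triangle (u := a) (v := i) (w := b)
    have h2 : G.dist i b = 1 := dist_eq_one_iff_adj.2 hb
    have h3 : G.dist b j = G.dist j b := dist_comm ..
    omega
  · have h3 : G.dist b j = G.dist j b := dist_comm ..
    rcases tree_dist_succ G hT ha i with hai | hai
    · have h1 := hc.dist_triangle (u := a) (v := j) (w := b)
      have h2 : G.dist a j = 1 := dist_eq_one_iff_adj.2 ha.symm
      have h4 : G.dist a i = G.dist i a := dist_comm ..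
      omega
    · have h4 : G.dist a i = G.dist i a := dist_comm ..
      rcases tree_dist_succ G hT ha b with hab | hab
      · exfalso
        have habd : G.dist a b = G.dist b a := dist_comm ..
        obtain ⟨q1, hq1, hl1⟩ := hc.exists_path_of_dist a i
        obtain ⟨q2, hq2, hl2⟩ := hc.exists_path_of_dist j b
        have hlc : (q1.concat hb).length = q1.length + 1 := Walk.length_concat _ _
        have hlen1 : (q1.concat hb).length = G.dist a b := by
          rw [hlc, hl1, habd, hab]; omega
        have hp1 : (q1.concat hb).IsPath := Walk.isPath_of_length_eq_dist _ hlen1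
        have hia : a ≠ i := by
          intro h; subst h
          rw [SimpleGraph.dist_self] at hai
          omega
        have hiq2 : i ∉ q2.support := by
          intro hmem
          have hs := split_dist G hc q2 hl2 hmem
          have h5 : G.dist i b = 1 := dist_eq_one_iff_adj.2 hb
          omega
        have haq2 : a ∉ q2.support := by
          intro hmem
          have hs := split_dist G hc q2 hl2 hmem
          have h5 : G.dist j a = 1 := dist_eq_one_iff_adj.2 ha
          omega
        have hp2 : (Walk.cons ha.symm q2).IsPath := hq2.cons haq2
        have heq : q1.concat hb = Walk.cons ha.symm q2 :=
          (hT.existsUnique_path a b).unique hp1 hp2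
        have hi1 : i ∈ (q1.concat hb).support := by
          rw [Walk.support_concat]
          simpa using Or.inl (Walk.end_mem_support q1)
        rw [heq] at hi1
        simp only [Walk.support_cons, List.mem_cons] at hi1
        rcases hi1 with h | h
        · exact hia h.symm
        · exact hiq2 h
      · have habd : G.dist a b = G.dist b a := dist_comm ..
        omega

lemma cond_step (hT : G.IsTree) {i j x y : V} (hx : x ≠ j)
    (hCx : G.dist x i = G.dist x j + G.dist i j) (hadj : G.Adj x y)
    (hD : G.dist y j = G.dist x j + 1) :
    G.dist y i = G.dist y j + G.dist i j := by
  have hc := hT.isConnected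
  have htri : G.dist y i ≤ G.dist y j + G.dist j i := hc.dist_triangle
  have hdji : G.dist j i = G.dist i j := dist_comm ..
  rcases tree_dist_succ G hT hadj i with hyi | hyi
  · have c1 : G.dist i y = G.dist y i := dist_comm ..
    have c2 : G.dist i x = G.dist x i := dist_comm ..
    omega
  · exfalso
    have c1 : G.dist i y = G.dist y i := dist_comm ..
    have c2 : G.dist i x = G.dist x i := dist_comm ..
    obtain ⟨q1, hq1, hl1⟩ := hc.exists_path_of_dist x j
    obtain ⟨q2, hq2, hl2⟩ := hc.exists_path_of_dist j i
    have hlapp : (q1.append q2).length = G.dist x i := by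
      rw [Walk.length_append]; omega
    have hp : (q1.append q2).IsPath := Walk.isPath_of_length_eq_dist _ hlapp
    have hxj0 : G.dist x j ≠ 0 := fun h0 => hx (hc.dist_eq_zero_iff.mp h0)
    have hyq : y ∉ (q1.append q2).support := by
      rw [Walk.mem_support_append_iff]
      rintro (hmem | hmem)
      · have hs := split_dist G hc q1 hl1 hmem
        omega
      · have hs := split_dist G hc q2 hl2 hmem
        have c3 : G.dist j y = G.dist y j := dist_comm ..
        omega
    have hp2 : (Walk.cons hadj.symm (q1.append q2)).IsPath := hp.cons hyq
    obtain ⟨q, hq, hql⟩ := hc.exists_path_of_dist y i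
    have heq : q = Walk.cons hadj.symm (q1.append q2) :=
      (hT.existsUnique_path y i).unique hq hp2
    have : q.length = (q1.append q2).length + 1 := by rw [heq, Walk.length_cons]
    omega

/-- The Kantorovich potential. -/
noncomputable def pot (i j : V) : V → ℝ := fun x =>
  if x ≠ j ∧ G.dist x i = G.dist x j + G.dist i j
  then -(G.dist x j : ℝ) else (G.dist x j : ℝ)

lemma pot_lip_dir (hT : G.IsTree) {i j x y : V} (hadj : G.Adj x y)
    (hD : G.dist y j = G.dist x j + 1) :
    |pot G i j x - pot G i j y| ≤ 1 := by
  have hc := hT.isConnected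
  have hyj : y ≠ j := by
    intro h; subst h; rw [SimpleGraph.dist_self] at hD; omega
  by_cases hCx : x ≠ j ∧ G.dist x i = G.dist x j + G.dist i j
  · have hCy : G.dist y i = G.dist y j + G.dist i j :=
      cond_step G hT hCx.1 hCx.2 hadj hD
    rw [pot, pot, if_pos hCx, if_pos ⟨hyj, hCy⟩, hD]
    push_cast
    rw [show -(G.dist x j : ℝ) - -((G.dist x j : ℝ) + 1) = 1 by ring]
    norm_num
  · by_cases hCy : y ≠ j ∧ G.dist y i = G.dist y j + G.dist i j
    · have htri : G.dist x i ≤ G.dist x j + G.dist j i := hc.dist_triangle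
      have hdji : G.dist j i = G.dist i j := dist_comm ..
      rcases tree_dist_succ G hT hadj i with hyi | hyi
      · have c1 : G.dist i y = G.dist y i := dist_comm ..
        have c2 : G.dist i x = G.dist x i := dist_comm ..
        have hxj : x = j := by
          by_contra hxj
          exact hCx ⟨hxj, by omega⟩
        have hDx0 : G.dist x j = 0 := by rw [hxj]; exact SimpleGraph.dist_self
        rw [pot, pot, if_neg hCx, if_pos hCy]
        rw [hDx0] at hD
        rw [hDx0, hD]
        norm_num
      · exfalso
        have c1 : G.dist i y = G.dist y i := dist_comm ..
        have c2 : G.dist i x = G.dist x i := dist_comm ..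
        omega
    · rw [pot, pot, if_neg hCx, if_neg hCy, hD]
      push_cast
      rw [show (G.dist x j : ℝ) - ((G.dist x j : ℝ) + 1) = -1 by ring]
      norm_num

lemma lip_walk (f : V → ℝ) (h1 : ∀ x y, G.Adj x y → |f x - f y| ≤ 1) :
    ∀ {x y : V} (w : G.Walk x y), |f x - f y| ≤ w.length := by
  intro x y w
  induction w with
  | nil => simp
  | cons h q ih =>
    rw [Walk.length_cons]
    calc |f _ - f _| ≤ |f _ - f _| + |f _ - f _| := abs_sub_le _ _ _
      _ ≤ 1 + q.length := add_le_add (h1 _ _ h) ih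
      _ = ((q.length + 1 : ℕ) : ℝ) := by push_cast; ring

lemma pot_lip (hT : G.IsTree) (i j : V) :
    ∀ x y : V, |pot G i j x - pot G i j y| ≤ (G.dist x y : ℝ) := by
  have hedge : ∀ x y, G.Adj x y → |pot G i j x - pot G i j y| ≤ 1 := by
    intro x y hadj
    rcases tree_dist_succ G hT hadj j with h | h
    · have c1 : G.dist j y = G.dist y j := dist_comm ..
      have c2 : G.dist j x = G.dist x j := dist_comm ..
      exact pot_lip_dir G hT hadj (by omega)
    · have c1 : G.dist j y = G.dist y j := dist_comm ..
      have c2 : G.dist j x = G.dist x j := dist_comm ..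
      rw [abs_sub_comm]
      exact pot_lip_dir G hT hadj.symm (by omega)
  intro x y
  obtain ⟨w, hw⟩ := hT.isConnected.exists_walk_length_eq_dist x y
  calc |pot G i j x - pot G i j y| ≤ w.length := lip_walk G _ hedge w
    _ = (G.dist x y : ℝ) := by rw [hw]

lemma pot_vertex_i {i j : V} (hc : G.Connected) (hne : i ≠ j) :
    pot G i j i = (G.dist i j : ℝ) := by
  rw [pot]
  rw [if_neg]
  rintro ⟨-, h⟩
  rw [SimpleGraph.dist_self] at h
  have : G.dist i j ≠ 0 := fun h0 => hne (hc.dist_eq_zero_iff.mp h0)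
  omega

lemma pot_vertex_j {i j : V} : pot G i j j = 0 := by
  rw [pot, if_neg (by simp), SimpleGraph.dist_self]
  simp

lemma pot_nbr_i {i j b : V} (hc : G.Connected) (hne : i ≠ j) (hnadj : ¬ G.Adj i j)
    (hb : G.Adj i b) : pot G i j b = (G.dist b j : ℝ) := by
  rw [pot, if_neg]
  rintro ⟨hbj, h⟩
  have h1 : G.dist b i = 1 := dist_eq_one_iff_adj.2 hb.symm
  have h2 : G.dist i j ≠ 0 := fun h0 => hne (hc.dist_eq_zero_iff.mp h0)
  have h3 : G.dist i j ≠ 1 := fun h1 => hnadj (dist_eq_one_iff_adj.mp h1)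
  omega

end Unfintype

variable {V : Type*} [Fintype V] [DecidableEq V] (G : SimpleGraph V) [DecidableRel G.Adj]

lemma sum_lazy (g : V → ℝ) (α : ℝ) (x : V) :
    ∑ b, g b * lazy G α x b =
      g x * α + ((1 - α) / (G.degree x : ℝ)) * ∑ b ∈ G.neighborFinset x, g b := by
  have step : ∀ b, g b * lazy G α x b =
      (if b = x then g b * α else 0) +
      (if G.Adj x b then g b * ((1 - α) / (G.degree x : ℝ)) else 0) := by
    intro b
    rw [lazy]
    by_cases h1 : b = x
    · subst h1
      simp [G.irrefl]
    · simp only [if_neg h1]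
      by_cases h2 : G.Adj x b <;> simp [h2]
  rw [Finset.sum_congr rfl (fun b _ => step b), Finset.sum_add_distrib]
  congr 1
  · simp
  · rw [SimpleGraph.neighborFinset_eq_filter, Finset.sum_filter, Finset.mul_sum]
    apply Finset.sum_congr rfl
    intro b _
    by_cases h2 : G.Adj x b <;> simp [h2, mul_comm]

lemma sum_nbr_dist (hT : G.IsTree) {i j : V} (hne : i ≠ j) :
    ∑ b ∈ G.neighborFinset i, (G.dist b j : ℝ) =
      (G.degree i : ℝ) * (G.dist i j + 1) - 2 := by
  obtain ⟨b₀, hb₀, hd₀⟩ := geo_nbr G hT.isConnected hne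
  have hmem : b₀ ∈ G.neighborFinset i := (SimpleGraph.mem_neighborFinset ..).2 hb₀
  rw [← Finset.add_sum_erase _ _ hmem]
  have hrest : ∀ b ∈ (G.neighborFinset i).erase b₀,
      (G.dist b j : ℝ) = (G.dist i j : ℝ) + 1 := by
    intro b hb
    obtain ⟨hne', hb'⟩ := Finset.mem_erase.1 hb
    have hadj : G.Adj i b := (SimpleGraph.mem_neighborFinset ..).1 hb'
    have hcomm : G.dist j b = G.dist b j := dist_comm ..
    have hcomm2 : G.dist j i = G.dist i j := dist_comm ..
    rcases tree_dist_succ G hT hadj j with h | h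
    · exact_mod_cast by omega
    · exact absurd (geo_nbr_unique G hT hadj hb₀ (by omega) hd₀) hne'
  rw [Finset.sum_congr rfl hrest, Finset.sum_const, Finset.card_erase_of_mem hmem]
  rw [← SimpleGraph.card_neighborFinset_eq_degree]
  have hcard : 1 ≤ (G.neighborFinset i).card := Finset.card_pos.2 ⟨b₀, hmem⟩
  have hcast : (((G.neighborFinset i).card - 1 : ℕ) : ℝ)
      = ((G.neighborFinset i).card : ℝ) - 1 := by
    push_cast [Nat.cast_sub hcard]; ring
  rw [nsmul_eq_mul, hcast]
  have hd₀' : (G.dist b₀ j : ℝ) = (G.dist i j : ℝ) - 1 := by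
    have : ((G.dist b₀ j : ℕ) : ℝ) + 1 = G.dist i j := by exact_mod_cast hd₀
    linarith
  rw [hd₀']
  ring

lemma sum_nbr_pot (hT : G.IsTree) {i j : V} (hne : i ≠ j) :
    ∑ a ∈ G.neighborFinset j, pot G i j a = 2 - (G.degree j : ℝ) := by
  have hc := hT.isConnected
  have hdij : G.dist j i = G.dist i j := dist_comm ..
  have hd0 : G.dist i j ≠ 0 := fun h0 => hne (hc.dist_eq_zero_iff.mp h0)
  obtain ⟨a₀, ha₀, hd₀⟩ := geo_nbr G hc hne.symm
  have hmem : a₀ ∈ G.neighborFinset j := (SimpleGraph.mem_neighborFinset ..).2 ha₀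
  rw [← Finset.add_sum_erase _ _ hmem]
  have hval₀ : pot G i j a₀ = 1 := by
    have h1 : G.dist a₀ j = 1 := dist_eq_one_iff_adj.2 ha₀.symm
    rw [pot, if_neg, h1]
    · norm_num
    · rintro ⟨-, h⟩
      omega
  have hrest : ∀ a ∈ (G.neighborFinset j).erase a₀, pot G i j a = -1 := by
    intro a ha
    obtain ⟨hne', ha'⟩ := Finset.mem_erase.1 ha
    have hadj : G.Adj j a := (SimpleGraph.mem_neighborFinset ..).1 ha'
    have h1 : G.dist a j = 1 := dist_eq_one_iff_adj.2 hadj.symm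
    have hcomm : G.dist i a = G.dist a i := dist_comm ..
    have haj : a ≠ j := hadj.symm.ne
    have hfar : G.dist a i = G.dist i j + 1 := by
      rcases tree_dist_succ G hT hadj i with h | h
      · omega
      · exact absurd (geo_nbr_unique G hT (j := i) hadj ha₀ (by omega) (by omega)) hne'
    rw [pot, if_pos ⟨haj, by omega⟩, h1]
    norm_num
  rw [Finset.sum_congr rfl hrest, Finset.sum_const, Finset.card_erase_of_mem hmem,
    ← SimpleGraph.card_neighborFinset_eq_degree, hval₀]
  have hcard : 1 ≤ (G.neighborFinset j).card := Finset.card_pos.2 ⟨a₀, hmem⟩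
  have hcast : (((G.neighborFinset j).card - 1 : ℕ) : ℝ)
      = ((G.neighborFinset j).card : ℝ) - 1 := by
    push_cast [Nat.cast_sub hcard]; ring
  rw [nsmul_eq_mul, hcast]
  ring

section coupling

variable (α : ℝ) (i j : V)

noncomputable def cpl : V → V → ℝ := fun a b =>
  if a = j ∧ b = i then α
  else if G.Adj j a ∧ G.Adj i b then (1 - α) / ((G.degree j : ℝ) * (G.degree i : ℝ))
  else 0

lemma cpl_col (hdi : G.degree i ≠ 0) (hdj : G.degree j ≠ 0) (b : V) :
    ∑ a, cpl G α i j a b = lazy G α i b := by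
  have hdi' : (G.degree i : ℝ) ≠ 0 := Nat.cast_ne_zero.mpr hdi
  have hdj' : (G.degree j : ℝ) ≠ 0 := Nat.cast_ne_zero.mpr hdj
  by_cases hbi : b = i
  · have hnb : ¬ G.Adj i b := by rw [hbi]; exact G.irrefl
    have key : ∀ a, cpl G α i j a b = if a = j then α else 0 := by
      intro a
      rw [cpl]
      by_cases haj : a = j
      · rw [if_pos ⟨haj, hbi⟩, if_pos haj]
      · rw [if_neg (by tauto), if_neg (by tauto), if_neg haj]
    rw [Finset.sum_congr rfl (fun a _ => key a), lazy, if_pos hbi]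
    simp
  · by_cases hib : G.Adj i b
    · have key : ∀ a, cpl G α i j a b =
          if G.Adj j a then (1 - α) / ((G.degree j : ℝ) * (G.degree i : ℝ)) else 0 := by
        intro a
        rw [cpl, if_neg (by tauto)]
        by_cases h : G.Adj j a
        · rw [if_pos ⟨h, hib⟩, if_pos h]
        · rw [if_neg (by tauto), if_neg h]
      rw [Finset.sum_congr rfl (fun a _ => key a)]
      rw [← Finset.sum_filter, ← SimpleGraph.neighborFinset_eq_filter, Finset.sum_const,
        SimpleGraph.card_neighborFinset_eq_degree, nsmul_eq_mul, lazy]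
      rw [if_neg hbi, if_pos hib]
      field_simp
    · have key : ∀ a, cpl G α i j a b = 0 := by
        intro a
        rw [cpl, if_neg (by tauto), if_neg (by tauto)]
      rw [Finset.sum_congr rfl (fun a _ => key a), lazy]
      simp [hbi, hib]

lemma cpl_row (hdi : G.degree i ≠ 0) (hdj : G.degree j ≠ 0) (a : V) :
    ∑ b, cpl G α i j a b = lazy G α j a := by
  have hdi' : (G.degree i : ℝ) ≠ 0 := Nat.cast_ne_zero.mpr hdi
  have hdj' : (G.degree j : ℝ) ≠ 0 := Nat.cast_ne_zero.mpr hdj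
  by_cases haj : a = j
  · have hna : ¬ G.Adj j a := by rw [haj]; exact G.irrefl
    have key : ∀ b, cpl G α i j a b = if b = i then α else 0 := by
      intro b
      rw [cpl]
      by_cases hbi : b = i
      · rw [if_pos ⟨haj, hbi⟩, if_pos hbi]
      · rw [if_neg (by tauto), if_neg (by tauto), if_neg hbi]
    rw [Finset.sum_congr rfl (fun b _ => key b), lazy, if_pos haj]
    simp
  · by_cases hja : G.Adj j a
    · have key : ∀ b, cpl G α i j a b =
          if G.Adj i b then (1 - α) / ((G.degree j : ℝ) * (G.degree i : ℝ)) else 0 := by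
        intro b
        rw [cpl, if_neg (by tauto)]
        by_cases h : G.Adj i b
        · rw [if_pos ⟨hja, h⟩, if_pos h]
        · rw [if_neg (by tauto), if_neg h]
      rw [Finset.sum_congr rfl (fun b _ => key b)]
      rw [← Finset.sum_filter, ← SimpleGraph.neighborFinset_eq_filter, Finset.sum_const,
        SimpleGraph.card_neighborFinset_eq_degree, nsmul_eq_mul, lazy]
      rw [if_neg haj, if_pos hja]
      field_simp
    · have key : ∀ b, cpl G α i j a b = 0 := by
        intro b
        rw [cpl, if_neg (by tauto), if_neg (by tauto)]
      rw [Finset.sum_congr rfl (fun b _ => key b), lazy]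
      simp [haj, hja]

lemma cpl_cost :
    ∑ a, ∑ b, cpl G α i j a b * (G.dist a b : ℝ) =
      α * (G.dist j i : ℝ) +
      (1 - α) / ((G.degree j : ℝ) * (G.degree i : ℝ)) *
        ∑ a ∈ G.neighborFinset j, ∑ b ∈ G.neighborFinset i, (G.dist a b : ℝ) := by
  have step : ∀ a b, cpl G α i j a b * (G.dist a b : ℝ) =
      (if a = j then (if b = i then α * (G.dist a b : ℝ) else 0) else 0) +
      (if G.Adj j a then (if G.Adj i b then
        (1 - α) / ((G.degree j : ℝ) * (G.degree i : ℝ)) * (G.dist a b : ℝ) else 0) else 0) := by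
    intro a b
    rw [cpl]
    by_cases h2 : a = j
    · have hna : ¬ G.Adj j a := by rw [h2]; exact G.irrefl
      by_cases h3 : b = i
      · have hnb : ¬ G.Adj i b := by rw [h3]; exact G.irrefl
        simp [h2, h3, hna, hnb]
      · simp [h2, h3, hna]
    · by_cases h4 : G.Adj j a <;> by_cases h5 : G.Adj i b <;>
        simp [h2, h4, h5]
  rw [Finset.sum_congr rfl (fun a _ => Finset.sum_congr rfl (fun b _ => step a b))]
  have split : ∀ a : V, ∑ b, ((if a = j then (if b = i then α * (G.dist a b : ℝ) else 0) else 0) +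
      (if G.Adj j a then (if G.Adj i b then
        (1 - α) / ((G.degree j : ℝ) * (G.degree i : ℝ)) * (G.dist a b : ℝ) else 0) else 0)) =
      (if a = j then α * (G.dist a i : ℝ) else 0) +
      (if G.Adj j a then ∑ b ∈ G.neighborFinset i,
        (1 - α) / ((G.degree j : ℝ) * (G.degree i : ℝ)) * (G.dist a b : ℝ) else 0) := by
    intro a
    rw [Finset.sum_add_distrib]
    congr 1
    · by_cases h : a = j
      · simp [h]
      · simp [h]
    · by_cases h : G.Adj j a
      · simp only [if_pos h]
        rw [SimpleGraph.neighborFinset_eq_filter, Finset.sum_filter]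
      · simp [h]
  rw [Finset.sum_congr rfl (fun a _ => split a), Finset.sum_add_distrib]
  congr 1
  · simp
  · conv_rhs => rw [Finset.mul_sum]
    rw [← Finset.sum_filter, ← SimpleGraph.neighborFinset_eq_filter]
    apply Finset.sum_congr rfl
    intro a _
    rw [Finset.mul_sum]

end coupling

end W1Aux

theorem stmt_9 {V : Type*} [Fintype V] [DecidableEq V] (G : SimpleGraph V)
    [DecidableRel G.Adj] (hT : G.IsTree) (α : ℝ) (hα : α ∈ Set.Ico (0 : ℝ) 1)
    (i j : V) (hne : i ≠ j) (hnadj : ¬ G.Adj i j) :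
    W1 G (lazy G α i) (lazy G α j) =
      (G.dist i j : ℝ) + (1 - α) *
        (((G.degree i : ℝ) - 2) / (G.degree i : ℝ) +
         ((G.degree j : ℝ) - 2) / (G.degree j : ℝ)) := by
  classical
  have hc := hT.isConnected
  obtain ⟨bi, hbi, -⟩ := W1Aux.geo_nbr G hc hne
  obtain ⟨aj, haj, -⟩ := W1Aux.geo_nbr G hc hne.symm
  have hdi : G.degree i ≠ 0 :=
    Nat.pos_iff_ne_zero.mp ((G.degree_pos_iff_exists_adj i).2 ⟨bi, hbi⟩)
  have hdj : G.degree j ≠ 0 :=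
    Nat.pos_iff_ne_zero.mp ((G.degree_pos_iff_exists_adj j).2 ⟨aj, haj⟩)
  have hdi' : (G.degree i : ℝ) ≠ 0 := Nat.cast_ne_zero.mpr hdi
  have hdj' : (G.degree j : ℝ) ≠ 0 := Nat.cast_ne_zero.mpr hdj
  have hdi0 : (0:ℝ) < (G.degree i : ℝ) := by
    exact_mod_cast Nat.pos_of_ne_zero hdi
  have hdj0 : (0:ℝ) < (G.degree j : ℝ) := by
    exact_mod_cast Nat.pos_of_ne_zero hdj
  have hα0 : (0:ℝ) ≤ α := hα.1
  have hα1 : α < 1 := hα.2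
  have hDji : (G.dist j i : ℝ) = (G.dist i j : ℝ) := by rw [SimpleGraph.dist_comm]
  set D : ℝ := (G.dist i j : ℝ) with hDdef
  set T : ℝ := D + (1 - α) *
      (((G.degree i : ℝ) - 2) / (G.degree i : ℝ) +
       ((G.degree j : ℝ) - 2) / (G.degree j : ℝ)) with hTdef
  -- evaluation of the potential sums
  have hSnbr : ∑ b ∈ G.neighborFinset i, W1Aux.pot G i j b
      = (G.degree i : ℝ) * (D + 1) - 2 := by
    rw [Finset.sum_congr rfl (fun b hb => W1Aux.pot_nbr_i G hc hne hnadj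
      ((SimpleGraph.mem_neighborFinset ..).1 hb))]
    exact W1Aux.sum_nbr_dist G hT hne
  have hS1 : ∑ b, W1Aux.pot G i j b * lazy G α i b
      = D * α + ((1 - α) / (G.degree i : ℝ)) * ((G.degree i : ℝ) * (D + 1) - 2) := by
    rw [W1Aux.sum_lazy, hSnbr, W1Aux.pot_vertex_i G hc hne]
  have hS2 : ∑ a, W1Aux.pot G i j a * lazy G α j a
      = ((1 - α) / (G.degree j : ℝ)) * (2 - (G.degree j : ℝ)) := by
    rw [W1Aux.sum_lazy, W1Aux.pot_vertex_j, W1Aux.sum_nbr_pot G hT hne]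
    ring
  have hTeq : T = (∑ b, W1Aux.pot G i j b * lazy G α i b)
      - (∑ a, W1Aux.pot G i j a * lazy G α j a) := by
    rw [hS1, hS2, hTdef]
    field_simp
    ring
  -- the lower bound for every admissible transport plan
  have hlb : ∀ c ∈ { c : ℝ | ∃ π : V → V → ℝ, (∀ i j, 0 ≤ π i j) ∧
      (∀ j', ∑ i', π i' j' = lazy G α i j') ∧ (∀ i', ∑ j', π i' j' = lazy G α j i') ∧
      c = ∑ i', ∑ j', π i' j' * (G.dist i' j' : ℝ) }, T ≤ c := by
    rintro c ⟨π, hπ0, hcol, hrow, rfl⟩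
    have per : ∀ a b : V,
        π a b * (W1Aux.pot G i j b - W1Aux.pot G i j a) ≤ π a b * (G.dist a b : ℝ) := by
      intro a b
      apply mul_le_mul_of_nonneg_left _ (hπ0 a b)
      have h1 := W1Aux.pot_lip G hT i j b a
      have h2 : (G.dist b a : ℝ) = (G.dist a b : ℝ) := by rw [SimpleGraph.dist_comm]
      calc W1Aux.pot G i j b - W1Aux.pot G i j a
          ≤ |W1Aux.pot G i j b - W1Aux.pot G i j a| := le_abs_self _
        _ ≤ (G.dist b a : ℝ) := h1
        _ = (G.dist a b : ℝ) := h2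
    have e1 : ∑ a, ∑ b, π a b * W1Aux.pot G i j b
        = ∑ b, W1Aux.pot G i j b * lazy G α i b := by
      rw [Finset.sum_comm]
      refine Finset.sum_congr rfl fun b _ => ?_
      rw [← hcol b, Finset.mul_sum]
      exact Finset.sum_congr rfl fun a _ => mul_comm _ _
    have e2 : ∑ a, ∑ b, π a b * W1Aux.pot G i j a
        = ∑ a, W1Aux.pot G i j a * lazy G α j a := by
      refine Finset.sum_congr rfl fun a _ => ?_
      rw [← hrow a, Finset.mul_sum]
      exact Finset.sum_congr rfl fun b _ => mul_comm _ _
    have hsum : ∑ a, ∑ b, π a b * (W1Aux.pot G i j b - W1Aux.pot G i j a)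
        = (∑ b, W1Aux.pot G i j b * lazy G α i b)
          - (∑ a, W1Aux.pot G i j a * lazy G α j a) := by
      rw [← e1, ← e2, ← Finset.sum_sub_distrib]
      refine Finset.sum_congr rfl fun a _ => ?_
      rw [← Finset.sum_sub_distrib]
      exact Finset.sum_congr rfl fun b _ => by ring
    calc T = (∑ b, W1Aux.pot G i j b * lazy G α i b)
          - (∑ a, W1Aux.pot G i j a * lazy G α j a) := hTeq
      _ = ∑ a, ∑ b, π a b * (W1Aux.pot G i j b - W1Aux.pot G i j a) := hsum.symm
      _ ≤ ∑ a, ∑ b, π a b * (G.dist a b : ℝ) :=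
          Finset.sum_le_sum fun a _ => Finset.sum_le_sum fun b _ => per a b
  -- the explicit coupling is admissible
  have hπ0 : ∀ a b, 0 ≤ W1Aux.cpl G α i j a b := by
    intro a b
    rw [W1Aux.cpl]
    split_ifs
    · exact hα0
    · apply div_nonneg (by linarith)
      positivity
    · exact le_rfl
  have hmem : (∑ a, ∑ b, W1Aux.cpl G α i j a b * (G.dist a b : ℝ)) ∈
      { c : ℝ | ∃ π : V → V → ℝ, (∀ i j, 0 ≤ π i j) ∧
      (∀ j', ∑ i', π i' j' = lazy G α i j') ∧ (∀ i', ∑ j', π i' j' = lazy G α j i') ∧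
      c = ∑ i', ∑ j', π i' j' * (G.dist i' j' : ℝ) } :=
    ⟨W1Aux.cpl G α i j, hπ0, W1Aux.cpl_col G α i j hdi hdj,
      W1Aux.cpl_row G α i j hdi hdj, rfl⟩
  -- the cost of the explicit coupling is at most T
  have hub : (∑ a, ∑ b, W1Aux.cpl G α i j a b * (G.dist a b : ℝ)) ≤ T := by
    rw [W1Aux.cpl_cost]
    have inner : ∀ a : V, ∑ b ∈ G.neighborFinset i,
        ((G.dist a i : ℝ) + (G.dist b j : ℝ) - D)
        = (G.degree i : ℝ) * ((G.dist a i : ℝ) - D) + ((G.degree i : ℝ) * (D + 1) - 2) := by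
      intro a
      have hpt : ∀ b : V, (G.dist a i : ℝ) + (G.dist b j : ℝ) - D
          = ((G.dist a i : ℝ) - D) + (G.dist b j : ℝ) := fun b => by ring
      rw [Finset.sum_congr rfl (fun b _ => hpt b), Finset.sum_add_distrib,
        Finset.sum_const, W1Aux.sum_nbr_dist G hT hne, nsmul_eq_mul,
        SimpleGraph.card_neighborFinset_eq_degree]
    have houtd : ∑ a ∈ G.neighborFinset j, (G.dist a i : ℝ)
        = (G.degree j : ℝ) * (D + 1) - 2 := by
      have := W1Aux.sum_nbr_dist G hT hne.symm
      rwa [hDji] at this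
    have hSig : ∑ a ∈ G.neighborFinset j, ∑ b ∈ G.neighborFinset i, (G.dist a b : ℝ)
        ≤ (G.degree i : ℝ) * ((G.degree j : ℝ) * (D + 1) - 2)
          + (G.degree j : ℝ) * ((G.degree i : ℝ) * (D + 1) - 2)
          - (G.degree j : ℝ) * (G.degree i : ℝ) * D := by
      calc ∑ a ∈ G.neighborFinset j, ∑ b ∈ G.neighborFinset i, (G.dist a b : ℝ)
          ≤ ∑ a ∈ G.neighborFinset j, ∑ b ∈ G.neighborFinset i,
            ((G.dist a i : ℝ) + (G.dist b j : ℝ) - D) := by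
            refine Finset.sum_le_sum fun a ha => Finset.sum_le_sum fun b hb => ?_
            have hja : G.Adj j a := (SimpleGraph.mem_neighborFinset ..).1 ha
            have hib : G.Adj i b := (SimpleGraph.mem_neighborFinset ..).1 hb
            have := W1Aux.pair_le G hT hne hnadj hja hib
            have hcast : (G.dist a b : ℝ) + (G.dist i j : ℝ)
                ≤ (G.dist a i : ℝ) + (G.dist b j : ℝ) := by exact_mod_cast this
            rw [hDdef]
            linarith
        _ = ∑ a ∈ G.neighborFinset j,
            ((G.degree i : ℝ) * ((G.dist a i : ℝ) - D) + ((G.degree i : ℝ) * (D + 1) - 2)) :=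
            Finset.sum_congr rfl fun a _ => inner a
        _ = (G.degree i : ℝ) * (((G.degree j : ℝ) * (D + 1) - 2) - (G.degree j : ℝ) * D)
            + (G.degree j : ℝ) * ((G.degree i : ℝ) * (D + 1) - 2) := by
            rw [Finset.sum_add_distrib, Finset.sum_const, nsmul_eq_mul,
              SimpleGraph.card_neighborFinset_eq_degree]
            have hpt : ∀ a : V, (G.degree i : ℝ) * ((G.dist a i : ℝ) - D)
                = (G.degree i : ℝ) * (G.dist a i : ℝ) - (G.degree i : ℝ) * D :=
              fun a => by ring
            rw [Finset.sum_congr rfl (fun a _ => hpt a), Finset.sum_sub_distrib,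
              ← Finset.mul_sum, houtd, Finset.sum_const, nsmul_eq_mul,
              SimpleGraph.card_neighborFinset_eq_degree]
            ring
        _ = _ := by ring
    have hc0 : 0 ≤ (1 - α) / ((G.degree j : ℝ) * (G.degree i : ℝ)) := by
      apply div_nonneg (by linarith)
      positivity
    have := mul_le_mul_of_nonneg_left hSig hc0
    have hfinal : α * (G.dist j i : ℝ) +
        (1 - α) / ((G.degree j : ℝ) * (G.degree i : ℝ)) *
        ((G.degree i : ℝ) * ((G.degree j : ℝ) * (D + 1) - 2)
          + (G.degree j : ℝ) * ((G.degree i : ℝ) * (D + 1) - 2)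
          - (G.degree j : ℝ) * (G.degree i : ℝ) * D) = T := by
      rw [hDji, hTdef]
      field_simp
      ring
    linarith
  rw [W1]
  apply le_antisymm
  · calc sInf _ ≤ ∑ a, ∑ b, W1Aux.cpl G α i j a b * (G.dist a b : ℝ) :=
        csInf_le ⟨T, hlb⟩ hmem
      _ ≤ T := hub
  · exact le_csInf ⟨_, hmem⟩ hlb
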